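/- Let A be an n×n {0,1}-matrix, c ∈ {0,1}^n, Ã(i,j) = A(i,j) − c_i, and define the (n+2)×(n+2) integer matrix A_{C_n} by: its upper-left n×n block is A, its (i, n+1) entry is c_i and (i, n+2) entry is 0 for i ≤ n, its (n+1)st row is (1,...,1,1,1), and its (n+2)nd row is (0,...,0,1,0). Then there is a group isomorphism Coker(I_n − Ã) ≅ Coker(I_{n+2} − A_{C_n}) carrying the class of −C_n = (−c_1,...,−c_n) to the class of (−c_1,...,−c_n, 0, 0), and a group isomorphism Ker(I_n − Ã) ≅ Ker(I_{n+2} − A_{C_n}). -/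

import Mathlib

open Matrix

/-- The n×n integer matrix `Ã` with `Ã(i,j) = A(i,j) − c_i`. -/
def Atil (n : ℕ) (A : Matrix (Fin n) (Fin n) ℤ) (c : Fin n → ℤ) :
    Matrix (Fin n) (Fin n) ℤ :=
  Matrix.of fun i j => A i j - c i

/-- The (n+2)×(n+2) matrix `A_{C_n}`: upper-left n×n block `A`, then for
`i ≤ n` the (i,n+1) entry is `c_i` and the (i,n+2) entry is `0`; the
(n+1)st row is all 1's and the (n+2)nd row is `(0,…,0,1,0)`.
(All indices 0-based in the formalization.) -/
def ACn (n : ℕ) (A : Matrix (Fin n) (Fin n) ℤ) (c : Fin n → ℤ) :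
    Matrix (Fin (n + 2)) (Fin (n + 2)) ℤ :=
  Matrix.of fun i j =>
    if hi : (i : ℕ) < n then
      (if hj : (j : ℕ) < n then A ⟨i, hi⟩ ⟨j, hj⟩
       else if (j : ℕ) = n then c ⟨i, hi⟩ else 0)
    else if (i : ℕ) = n then 1
    else (if (j : ℕ) = n then 1 else 0)

/-- The vector `(−c_1,…,−c_n,0,0) ∈ ℤ^{n+2}`. -/
def negCvec (n : ℕ) (c : Fin n → ℤ) : Fin (n + 2) → ℤ :=
  fun k => if h : (k : ℕ) < n then -c ⟨k, h⟩ else 0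

namespace Stmt8Aux

variable (n : ℕ) (A : Matrix (Fin n) (Fin n) ℤ) (c : Fin n → ℤ)

def emb (i : Fin n) : Fin (n + 2) := ⟨i, by omega⟩
def iN : Fin (n + 2) := ⟨n, by omega⟩
def iN1 : Fin (n + 2) := ⟨n + 1, by omega⟩

lemma sum_split (f : Fin (n + 2) → ℤ) :
    ∑ k, f k = (∑ j : Fin n, f (emb n j)) + f (iN n) + f (iN1 n) := by
  rw [Fin.sum_univ_castSucc, Fin.sum_univ_castSucc]
  rfl

lemma N_emb_emb (i j : Fin n) :
    (1 - ACn n A c) (emb n i) (emb n j) = (if i = j then 1 else 0) - A i j := by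
  simp [Matrix.sub_apply, Matrix.one_apply, ACn, emb, Fin.ext_iff]

lemma N_emb_iN (i : Fin n) : (1 - ACn n A c) (emb n i) (iN n) = -c i := by
  have : (i : ℕ) ≠ n := by omega
  simp [Matrix.sub_apply, Matrix.one_apply, ACn, emb, iN, Fin.ext_iff, this, i.isLt.ne]

lemma N_emb_iN1 (i : Fin n) : (1 - ACn n A c) (emb n i) (iN1 n) = 0 := by
  have h1 : ¬ ((i : ℕ) = n + 1) := by omega
  have h2 : ¬ ((n + 1 : ℕ) < n) := by omega
  have h3 : ¬ ((n + 1 : ℕ) = n) := by omega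
  simp [Matrix.sub_apply, Matrix.one_apply, ACn, emb, iN1, Fin.ext_iff, h1, h2, h3]

lemma N_iN_emb (j : Fin n) : (1 - ACn n A c) (iN n) (emb n j) = -1 := by
  have h1 : ¬ ((n : ℕ) = (j:ℕ)) := by omega
  have h2 : ¬ ((n : ℕ) < n) := by omega
  simp [Matrix.sub_apply, Matrix.one_apply, ACn, emb, iN, Fin.ext_iff, h1, h2]

lemma N_iN_iN : (1 - ACn n A c) (iN n) (iN n) = 0 := by
  have h2 : ¬ ((n : ℕ) < n) := by omega
  simp [Matrix.sub_apply, Matrix.one_apply, ACn, iN, Fin.ext_iff, h2]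

lemma N_iN_iN1 : (1 - ACn n A c) (iN n) (iN1 n) = -1 := by
  have h1 : ¬ ((n : ℕ) = n + 1) := by omega
  have h2 : ¬ ((n : ℕ) < n) := by omega
  simp [Matrix.sub_apply, Matrix.one_apply, ACn, iN, iN1, Fin.ext_iff, h1, h2]

lemma N_iN1_emb (j : Fin n) : (1 - ACn n A c) (iN1 n) (emb n j) = 0 := by
  have h1 : ¬ ((n + 1 : ℕ) = (j:ℕ)) := by omega
  have h2 : ¬ ((n + 1 : ℕ) < n) := by omega
  have h3 : ¬ ((n + 1 : ℕ) = n) := by omega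
  have h4 : ¬ ((j : ℕ) = n) := by omega
  simp [Matrix.sub_apply, Matrix.one_apply, ACn, emb, iN1, Fin.ext_iff, h1, h2, h3, h4]

lemma N_iN1_iN : (1 - ACn n A c) (iN1 n) (iN n) = -1 := by
  have h1 : ¬ ((n + 1 : ℕ) = n) := by omega
  have h2 : ¬ ((n + 1 : ℕ) < n) := by omega
  have h3 : ¬ ((n : ℕ) < n) := by omega
  simp [Matrix.sub_apply, Matrix.one_apply, ACn, iN, iN1, Fin.ext_iff, h1, h2, h3]

lemma N_iN1_iN1 : (1 - ACn n A c) (iN1 n) (iN1 n) = 1 := by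
  have h1 : ¬ ((n + 1 : ℕ) = n) := by omega
  have h2 : ¬ ((n + 1 : ℕ) < n) := by omega
  simp [Matrix.sub_apply, Matrix.one_apply, ACn, iN1, Fin.ext_iff, h1, h2]


lemma M_mulVec (x : Fin n → ℤ) (i : Fin n) :
    (1 - Atil n A c).mulVec x i
      = x i - (∑ j, A i j * x j) + c i * (∑ j, x j) := by
  simp only [Matrix.mulVec, dotProduct, Matrix.sub_apply, Matrix.one_apply, Atil,
    Matrix.of_apply, sub_mul]
  rw [Finset.sum_sub_distrib, Finset.sum_sub_distrib]
  simp [Finset.sum_ite_eq, ite_mul, Finset.mul_sum]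
  ring

lemma N_mulVec_emb (v : Fin (n + 2) → ℤ) (i : Fin n) :
    (1 - ACn n A c).mulVec v (emb n i)
      = v (emb n i) - (∑ j, A i j * v (emb n j)) - c i * v (iN n) := by
  simp only [Matrix.mulVec, dotProduct]
  rw [sum_split]
  simp only [N_emb_emb, N_emb_iN, N_emb_iN1, sub_mul, ite_mul, one_mul, zero_mul]
  rw [Finset.sum_sub_distrib]
  simp [Finset.sum_ite_eq]
  ring

lemma N_mulVec_iN (v : Fin (n + 2) → ℤ) :
    (1 - ACn n A c).mulVec v (iN n)
      = -(∑ j, v (emb n j)) - v (iN1 n) := by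
  simp only [Matrix.mulVec, dotProduct]
  rw [sum_split]
  simp only [N_iN_emb, N_iN_iN, N_iN_iN1]
  simp
  ring

lemma N_mulVec_iN1 (v : Fin (n + 2) → ℤ) :
    (1 - ACn n A c).mulVec v (iN1 n) = -v (iN n) + v (iN1 n) := by
  simp only [Matrix.mulVec, dotProduct]
  rw [sum_split]
  simp only [N_iN1_emb, N_iN1_iN, N_iN1_iN1]
  simp
  try ring


/-- extension by zero -/
def fmap : (Fin n → ℤ) →ₗ[ℤ] (Fin (n + 2) → ℤ) where
  toFun x k := if h : (k : ℕ) < n then x ⟨k, h⟩ else 0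
  map_add' x y := by funext k; by_cases h : (k : ℕ) < n <;> simp [h]
  map_smul' m x := by funext k; by_cases h : (k : ℕ) < n <;> simp [h]

/-- lift with last two coords `-∑ x` -/
def gmap : (Fin n → ℤ) →ₗ[ℤ] (Fin (n + 2) → ℤ) where
  toFun x k := if h : (k : ℕ) < n then x ⟨k, h⟩ else -(∑ j, x j)
  map_add' x y := by
    funext k; by_cases h : (k : ℕ) < n <;> simp [h, Finset.sum_add_distrib] <;> ring
  map_smul' m x := by
    funext k; by_cases h : (k : ℕ) < n <;> simp [h, Finset.mul_sum]

/-- retraction -/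
def pmap : (Fin (n + 2) → ℤ) →ₗ[ℤ] (Fin n → ℤ) where
  toFun v i := v (emb n i) - (v (iN n) + v (iN1 n)) * c i
  map_add' v w := by funext i; simp; ring
  map_smul' m v := by funext i; simp; ring

/-- projection to first n coords -/
def pimap : (Fin (n + 2) → ℤ) →ₗ[ℤ] (Fin n → ℤ) where
  toFun v i := v (emb n i)
  map_add' v w := rfl
  map_smul' m v := rfl

@[simp] lemma fmap_emb (x : Fin n → ℤ) (i : Fin n) : fmap n x (emb n i) = x i := by
  simp [fmap, emb]
@[simp] lemma fmap_iN (x : Fin n → ℤ) : fmap n x (iN n) = 0 := by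
  simp [fmap, iN]
@[simp] lemma fmap_iN1 (x : Fin n → ℤ) : fmap n x (iN1 n) = 0 := by
  simp [fmap, iN1]
@[simp] lemma gmap_emb (x : Fin n → ℤ) (i : Fin n) : gmap n x (emb n i) = x i := by
  simp [gmap, emb]
@[simp] lemma gmap_iN (x : Fin n → ℤ) : gmap n x (iN n) = -(∑ j, x j) := by
  simp [gmap, iN]
@[simp] lemma gmap_iN1 (x : Fin n → ℤ) : gmap n x (iN1 n) = -(∑ j, x j) := by
  simp [gmap, iN1]

lemma cases3 (k : Fin (n + 2)) : (∃ i : Fin n, k = emb n i) ∨ k = iN n ∨ k = iN1 n := by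
  rcases lt_or_ge (k : ℕ) n with h | h
  · exact Or.inl ⟨⟨k, h⟩, Fin.ext rfl⟩
  · have hk := k.isLt
    rcases Nat.eq_or_lt_of_le h with h' | h'
    · exact Or.inr (Or.inl (Fin.ext h'.symm))
    · exact Or.inr (Or.inr (Fin.ext (by simp [iN1]; omega)))

lemma L1 (x : Fin n → ℤ) :
    (1 - ACn n A c).mulVec (gmap n x) = fmap n ((1 - Atil n A c).mulVec x) := by
  funext k
  rcases cases3 n k with ⟨i, rfl⟩ | rfl | rfl
  · rw [N_mulVec_emb, fmap_emb, M_mulVec]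
    simp
    try ring
  · rw [N_mulVec_iN, fmap_iN]
    simp
  · rw [N_mulVec_iN1, fmap_iN1]
    simp

lemma L2 (v : Fin (n + 2) → ℤ) :
    pmap n c ((1 - ACn n A c).mulVec v) = (1 - Atil n A c).mulVec (pimap n v) := by
  funext i
  simp only [pmap, pimap, LinearMap.coe_mk, AddHom.coe_mk]
  rw [N_mulVec_emb, N_mulVec_iN, N_mulVec_iN1, M_mulVec]
  ring

lemma L3 (x : Fin n → ℤ) : pmap n c (fmap n x) = x := by
  funext i
  simp [pmap]

def wvec (v : Fin (n + 2) → ℤ) : Fin (n + 2) → ℤ :=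
  fun k => if (k : ℕ) = n then v (iN n) + v (iN1 n)
    else if (k : ℕ) = n + 1 then v (iN n) else 0

@[simp] lemma wvec_emb (v : Fin (n + 2) → ℤ) (i : Fin n) : wvec n v (emb n i) = 0 := by
  have h1 : ¬ ((i : ℕ) = n) := by omega
  have h2 : ¬ ((i : ℕ) = n + 1) := by omega
  simp [wvec, emb, h1, h2]
@[simp] lemma wvec_iN (v : Fin (n + 2) → ℤ) : wvec n v (iN n) = v (iN n) + v (iN1 n) := by
  simp [wvec, iN]
@[simp] lemma wvec_iN1 (v : Fin (n + 2) → ℤ) : wvec n v (iN1 n) = v (iN n) := by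
  have h1 : ¬ ((n + 1 : ℕ) = n) := by omega
  simp [wvec, iN1, h1]

lemma L4 (v : Fin (n + 2) → ℤ) :
    fmap n (pmap n c v) - v = (1 - ACn n A c).mulVec (wvec n v) := by
  funext k
  rcases cases3 n k with ⟨i, rfl⟩ | rfl | rfl
  · rw [Pi.sub_apply, N_mulVec_emb, fmap_emb]
    simp [pmap]
    ring
  · rw [Pi.sub_apply, N_mulVec_iN, fmap_iN]
    simp
  · rw [Pi.sub_apply, N_mulVec_iN1, fmap_iN1]
    simp


end Stmt8Aux

open Stmt8Aux

theorem stmt8 (n : ℕ) (A : Matrix (Fin n) (Fin n) ℤ) (c : Fin n → ℤ)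
    (hA : ∀ i j, A i j = 0 ∨ A i j = 1) (hc : ∀ i, c i = 0 ∨ c i = 1) :
    (∃ e : ((Fin n → ℤ) ⧸ LinearMap.range (1 - Atil n A c).mulVecLin) ≃ₗ[ℤ]
        ((Fin (n + 2) → ℤ) ⧸ LinearMap.range (1 - ACn n A c).mulVecLin),
      e (Submodule.Quotient.mk (fun i => -c i)) =
        Submodule.Quotient.mk (negCvec n c)) ∧
    Nonempty (LinearMap.ker (1 - Atil n A c).mulVecLin ≃ₗ[ℤ]
      LinearMap.ker (1 - ACn n A c).mulVecLin) := by
  set M := (1 - Atil n A c).mulVecLin with hM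
  set N := (1 - ACn n A c).mulVecLin with hN
  have hf : LinearMap.range M ≤ (LinearMap.range N).comap (fmap n) := by
    rintro _ ⟨x, rfl⟩
    exact ⟨gmap n x, by exact L1 n A c x⟩
  have hp : LinearMap.range N ≤ (LinearMap.range M).comap (pmap n c) := by
    rintro _ ⟨v, rfl⟩
    exact ⟨pimap n v, by exact (L2 n A c v).symm⟩
  set F := Submodule.mapQ _ _ (fmap n) hf with hF
  set G := Submodule.mapQ _ _ (pmap n c) hp with hG
  have hFG : F.comp G = LinearMap.id := by
    apply Submodule.linearMap_qext
    refine LinearMap.ext fun v => ?_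
    simp only [LinearMap.comp_apply, Submodule.mkQ_apply, hF, hG, Submodule.mapQ_apply,
      LinearMap.id_apply]
    rw [Submodule.Quotient.eq]
    exact ⟨wvec n v, by exact (L4 n A c v).symm⟩
  have hGF : G.comp F = LinearMap.id := by
    apply Submodule.linearMap_qext
    refine LinearMap.ext fun x => ?_
    simp only [LinearMap.comp_apply, Submodule.mkQ_apply, hF, hG, Submodule.mapQ_apply,
      LinearMap.id_apply, L3 n c x]
  constructor
  · refine ⟨LinearEquiv.ofLinear F G hFG hGF, ?_⟩
    show F (Submodule.Quotient.mk _) = _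
    rw [hF, Submodule.mapQ_apply]
    have hfc : (fmap n) (fun i => -c i) = negCvec n c := by
      funext k
      simp [fmap, negCvec]
    rw [hfc]
  · have hgk : ∀ x ∈ LinearMap.ker M, gmap n x ∈ LinearMap.ker N := by
      intro x hx
      have hx' : (1 - Atil n A c).mulVec x = 0 := hx
      show N (gmap n x) = 0
      rw [hN, Matrix.mulVecLin_apply, L1 n A c x, hx', map_zero]
    have hpk : ∀ v ∈ LinearMap.ker N, pimap n v ∈ LinearMap.ker M := by
      intro v hv
      have hv' : (1 - ACn n A c).mulVec v = 0 := hv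
      show M (pimap n v) = 0
      rw [hM, Matrix.mulVecLin_apply, ← L2 n A c v, hv', map_zero]
    refine ⟨LinearEquiv.ofLinear ((gmap n).restrict hgk) ((pimap n).restrict hpk) ?_ ?_⟩
    · refine LinearMap.ext fun ⟨v, hv⟩ => Subtype.ext ?_
      have hv' : (1 - ACn n A c).mulVec v = 0 := hv
      simp only [LinearMap.comp_apply, LinearMap.restrict_apply, LinearMap.id_apply]
      have e1 : -v (iN n) + v (iN1 n) = 0 := by rw [← N_mulVec_iN1 n A c v, hv']; rfl
      have e2 : -(∑ j, v (emb n j)) - v (iN1 n) = 0 := by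
        rw [← N_mulVec_iN n A c v, hv']; rfl
      funext k
      rcases cases3 n k with ⟨i, rfl⟩ | rfl | rfl
      · simp [pimap]
      · simp [pimap] at e2 ⊢; omega
      · simp [pimap] at e2 ⊢; omega
    · refine LinearMap.ext fun ⟨x, hx⟩ => Subtype.ext ?_
      simp only [LinearMap.comp_apply, LinearMap.restrict_apply, LinearMap.id_apply]
      funext i
      simp [pimap]
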